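/- arXiv:1801.04977 — 2 statements merged into one kernel-verified Lean document; each statement's English description precedes it below -/
import Mathlib

section
/- Suppose the matrix A is real (b_0, b_1, c_{-1}, c_0 ∈ ℝ) and t_k ∈ ℝ is a phase root, i.e., e^{2int_k} = e^{iΨ(t_k)} where Ψ is a continuous argument of g(e^{it}) and g(z) = p(z)/(z^4 p(1/z)) with p(z) = (b_1 z^2 + b_0 z + 1)(c_{-1} z^2 + c_0 z + 1). Then e^{it_k} is an exact root of H(z) = z^{2n} p_rev(z) - p(z), where p_rev(z) = z^4 p(1/z). -/
open Complex

theorem stmt_9 (n : ℕ) (hn : 0 < n) (b0 b1 cm1 c0 : ℝ)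
    (p prev g : ℂ → ℂ)
    (hp : ∀ z : ℂ, p z = ((b1 : ℂ) * z ^ 2 + (b0 : ℂ) * z + 1) *
      ((cm1 : ℂ) * z ^ 2 + (c0 : ℂ) * z + 1))
    (hprev : ∀ z : ℂ, prev z = z ^ 4 * p z⁻¹)
    (hg : ∀ z : ℂ, g z = p z / prev z)
    (hcirc : ∀ z : ℂ, ‖z‖ = 1 → p z ≠ 0 ∧ prev z ≠ 0)
    (Ψ : ℝ → ℝ)
    (hΨ : ∀ s : ℝ, g (Complex.exp ((s : ℂ) * I)) =
      (‖g (Complex.exp ((s : ℂ) * I))‖ : ℂ) *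
        Complex.exp ((Ψ s : ℂ) * I))
    (t : ℝ)
    (hphase : Complex.exp ((2 * n * t : ℂ) * I) = Complex.exp ((Ψ t : ℂ) * I)) :
    (Complex.exp ((t : ℂ) * I)) ^ (2 * n) * prev (Complex.exp ((t : ℂ) * I)) -
      p (Complex.exp ((t : ℂ) * I)) = 0 := by
  set z : ℂ := Complex.exp ((t : ℂ) * I) with hz
  have habs : ‖z‖ = 1 := Complex.norm_exp_ofReal_mul_I t
  obtain ⟨hpz, hprevz⟩ := hcirc z habs
  -- z⁻¹ = conj z
  have hzinv : z⁻¹ = starRingEnd ℂ z := by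
    rw [Complex.inv_def, Complex.normSq_eq_norm_sq, habs]
    simp
  -- p (conj z) = conj (p z)
  have hpconj : p (starRingEnd ℂ z) = starRingEnd ℂ (p z) := by
    rw [hp, hp]
    simp [map_mul, map_add, map_pow, Complex.conj_ofReal]
  have habsprev : ‖prev z‖ = ‖p z‖ := by
    rw [hprev, hzinv, hpconj, norm_mul, norm_pow, habs, Complex.norm_conj]
    ring
  have habsg : ‖g z‖ = 1 := by
    rw [hg, norm_div, habsprev, div_self]
    exact (norm_ne_zero_iff.mpr hpz)
  have hgz : g z = Complex.exp ((Ψ t : ℂ) * I) := by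
    have := hΨ t
    rw [← hz] at this
    rw [this, habsg]
    simp
  have hpow : z ^ (2 * n) = Complex.exp ((2 * n * t : ℂ) * I) := by
    rw [hz, ← Complex.exp_nat_mul]
    congr 1
    push_cast
    ring
  have : z ^ (2 * n) = g z := by rw [hpow, hphase, hgz]
  rw [this, hg, div_mul_cancel₀ _ hprevz, sub_self]
end

section
/- Let g be holomorphic on a neighborhood of a point z_0 inside the open unit disc with g(z_0) = 0 of multiplicity m, and fix ρ with |z_0| < ρ < 1. Then there is a constant M > 0 such that for all sufficiently large n, the disc of radius ε = M^{-1/m} ρ^{2n/m} centered at z_0 contains exactly m roots (with multiplicity) of the equation z^{2n} = g(z). -/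
open Complex Metric

open Filter Finset


/-- Simple zero factorization. -/
lemma simple_factor {f : ℂ → ℂ} {a : ℂ} (hf : AnalyticAt ℂ f a) (h0 : f a = 0)
    (h1 : deriv f a ≠ 0) :
    ∃ q : ℂ → ℂ, AnalyticAt ℂ q a ∧ q a ≠ 0 ∧ ∀ᶠ w in nhds a, f w = (w - a) * q w := by
  have htop : analyticOrderAt f a ≠ ⊤ := by
    intro h
    rw [analyticOrderAt_eq_top] at h
    have : deriv f a = deriv (fun _ : ℂ => (0:ℂ)) a := Filter.EventuallyEq.deriv_eq h
    simp [deriv_const] at this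
    exact h1 this
  obtain ⟨n, hn⟩ : ∃ n : ℕ, analyticOrderAt f a = n := by
    cases h : analyticOrderAt f a with
    | top => exact absurd h htop
    | coe n => exact ⟨n, rfl⟩
  obtain ⟨q, hq, hq0, heq⟩ := (hf.analyticOrderAt_eq_natCast).mp hn
  simp only [smul_eq_mul] at heq
  match n with
  | 0 =>
    exfalso
    have := heq.self_of_nhds
    simp [h0] at this
    exact hq0 this.symm
  | 1 =>
    exact ⟨q, hq, hq0, by simpa using heq⟩
  | (k+2) =>
    exfalso
    apply h1
    have hder : deriv f a = deriv (fun w => (w - a) ^ (k+2) * q w) a :=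
      Filter.EventuallyEq.deriv_eq heq
    rw [hder]
    have hd : HasDerivAt (fun w => (w - a) ^ (k+2) * q w)
        ((((k+2:ℕ)) * (a - a) ^ (k+1) * 1) * q a + (a - a) ^ (k+2) * deriv q a) a := by
      exact (((hasDerivAt_id a).sub_const a).pow _).mul hq.differentiableAt.hasDerivAt
    rw [hd.deriv]
    simp

/-- product over roots of unity -/
lemma prod_pow_sub (m : ℕ) (hm : 0 < m) (X Y : ℂ) :
    ∏ k ∈ Finset.range m, (X - Complex.exp (2 * Real.pi * I / m) ^ k * Y) = X ^ m - Y ^ m := by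
  set ζ := Complex.exp (2 * Real.pi * I / m) with hζ
  have hprim : IsPrimitiveRoot ζ m := Complex.isPrimitiveRoot_exp m hm.ne'
  have key : ∀ t : ℂ, ∏ k ∈ Finset.range m, (t - ζ ^ k) = t ^ m - 1 := by
    intro t
    have hpoly := Polynomial.X_pow_sub_one_eq_prod (R := ℂ) hm hprim
    have := congrArg (Polynomial.eval t) hpoly
    simp only [Polynomial.eval_sub, Polynomial.eval_pow, Polynomial.eval_X, Polynomial.eval_one,
      Polynomial.eval_prod, Polynomial.eval_C] at this
    rw [this]
    haveI : NeZero m := ⟨hm.ne'⟩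
    refine Finset.prod_bij (fun k _ => ζ ^ k) ?_ ?_ ?_ ?_
    · intro k hk
      refine (Polynomial.mem_nthRootsFinset hm 1).mpr ?_
      rw [← pow_mul, mul_comm, pow_mul, hprim.pow_eq_one, one_pow]
    · intro a ha b hb hab
      exact hprim.pow_inj (Finset.mem_range.mp ha) (Finset.mem_range.mp hb) hab
    · intro μ hμ
      obtain ⟨i, hi, hie⟩ := hprim.eq_pow_of_pow_eq_one ((Polynomial.mem_nthRootsFinset hm 1).mp hμ)
      exact ⟨i, Finset.mem_range.mpr hi, hie⟩
    · intro k hk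
      rfl
  by_cases hY : Y = 0
  · simp [hY, hm.ne']
  · have := key (X / Y)
    have hfac : ∀ k ∈ Finset.range m, X - ζ ^ k * Y = Y * (X / Y - ζ ^ k) := by
      intro k _
      field_simp
    have h2 : ∏ k ∈ Finset.range m, (X - ζ ^ k * Y) =
        Y ^ m * ∏ k ∈ Finset.range m, (X / Y - ζ ^ k) := by
      rw [Finset.prod_congr rfl hfac, Finset.prod_mul_distrib, Finset.prod_const,
        Finset.card_range]
    rw [h2, this]
    have hYm : Y ^ m ≠ 0 := pow_ne_zero _ hY
    rw [div_pow, mul_sub, mul_one, mul_div_assoc', mul_div_cancel_left₀ _ hYm]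

section helpers

lemma rpow_pow_eq {ρ : ℝ} (hρ0 : 0 < ρ) (m : ℕ) (n : ℕ) :
    ρ ^ ((2 * n : ℝ) / m) = (ρ ^ ((2 : ℝ)/m)) ^ n := by
  rw [show ((2 * n : ℝ))/m = ((2:ℝ)/m) * n by ring, Real.rpow_mul hρ0.le, Real.rpow_natCast]

end helpers

noncomputable def Complex.abs : AbsoluteValue ℂ ℝ := NormedField.toAbsoluteValue ℂ

lemma Complex.norm_eq_abs (z : ℂ) : ‖z‖ = Complex.abs z := rfl

lemma Complex.abs_ofReal (x : ℝ) : Complex.abs (x : ℂ) = |x| := Complex.norm_real x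

lemma Complex.continuous_abs : Continuous Complex.abs := continuous_norm

lemma Complex.abs_exp (z : ℂ) : Complex.abs (Complex.exp z) = Real.exp z.re := Complex.norm_exp z

lemma Complex.dist_eq_abs (z w : ℂ) : dist z w = Complex.abs (z - w) := Complex.dist_eq z w

set_option maxHeartbeats 2000000 in
theorem stmt_11 (g : ℂ → ℂ) (z0 : ℂ) (hz0 : ‖z0‖ < 1)
    (ρ : ℝ) (hρ1 : ‖z0‖ < ρ) (hρ2 : ρ < 1)
    (m : ℕ) (hm : 0 < m)
    (U : Set ℂ) (hU : U ∈ nhds z0) (hgU : DifferentiableOn ℂ g U)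
    (hmult : ∃ hfun : ℂ → ℂ, AnalyticAt ℂ hfun z0 ∧ hfun z0 ≠ 0 ∧
      ∀ᶠ z in nhds z0, g z = (z - z0) ^ m * hfun z) :
    ∃ M : ℝ, 0 < M ∧ ∃ n0 : ℕ, ∀ n : ℕ, n0 ≤ n →
      ∃ (S : Finset ℂ) (mult : ℂ → ℕ),
        (∀ z ∈ S, z ∈ closedBall z0 (M ^ (-(1 : ℝ) / m) * ρ ^ ((2 * n : ℝ) / m))) ∧
        (∀ z ∈ closedBall z0 (M ^ (-(1 : ℝ) / m) * ρ ^ ((2 * n : ℝ) / m)),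
          (z ^ (2 * n) = g z ↔ z ∈ S)) ∧
        (∀ z ∈ S, 0 < mult z ∧ ∃ hz : ℂ → ℂ, AnalyticAt ℂ hz z ∧ hz z ≠ 0 ∧
          ∀ᶠ w in nhds z, w ^ (2 * n) - g w = (w - z) ^ (mult z) * hz w) ∧
        ∑ z ∈ S, mult z = m := by
  have hz0 : Complex.abs z0 < 1 := hz0
  have hρ1 : Complex.abs z0 < ρ := hρ1
  obtain ⟨h, hh, hh0, hfac⟩ := hmult
  have hρ0 : 0 < ρ := (Complex.abs.nonneg z0).trans_lt hρ1
  set q : ℝ := ρ ^ ((2:ℝ)/m) with hqdef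
  have hq0 : 0 < q := Real.rpow_pos_of_pos hρ0 _
  have hq1 : q < 1 := Real.rpow_lt_one hρ0.le hρ2 (by positivity)
  have hεq : ∀ n : ℕ, ρ ^ ((2 * n : ℝ) / m) = q ^ n := fun n => rpow_pow_eq hρ0 m n
  by_cases hz00 : z0 = 0
  · subst hz00
    -- continuity bound for h
    have h2 : ∀ᶠ z in nhds 0, dist (h z) (h 0) < Complex.abs (h 0) / 2 := by
      have : (0:ℝ) < Complex.abs (h 0) / 2 := by
        have := Complex.abs.pos hh0; linarith
      exact Metric.tendsto_nhds.mp hh.continuousAt _ this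
    obtain ⟨δ, hδ0, hδ⟩ := Metric.eventually_nhds_iff.mp (hfac.and h2)
    set ε : ℝ := min (δ/2) (min 1 (Complex.abs (h 0) / 4)) with hεdef
    have hε0 : 0 < ε := by
      have := Complex.abs.pos hh0
      simp only [hεdef, lt_min_iff]
      refine ⟨by linarith, by norm_num, by linarith⟩
    have hevq : ∀ᶠ n : ℕ in atTop, q ^ n < ε := by
      have := tendsto_pow_atTop_nhds_zero_of_lt_one hq0.le hq1
      exact this.eventually_lt_const hε0
    obtain ⟨n0, hn0⟩ := eventually_atTop.mp (hevq.and (eventually_ge_atTop (m+1)))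
    refine ⟨1, one_pos, n0, ?_⟩
    intro n hn
    obtain ⟨hqn, hnm⟩ := hn0 n hn
    simp only [Real.one_rpow, one_mul, hεq]
    -- ball facts
    have hball : ∀ z ∈ closedBall (0:ℂ) (q ^ n),
        g z = z ^ m * h z ∧ Complex.abs (h 0) / 2 < Complex.abs (h z) := by
      intro z hz
      rw [mem_closedBall, dist_zero_right] at hz
      have hzδ : dist z 0 < δ := by
        rw [dist_zero_right]
        have : ε ≤ δ / 2 := min_le_left _ _
        calc ‖z‖ ≤ q ^ n := hz
        _ < ε := hqn
        _ ≤ δ/2 := this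
        _ < δ := by linarith
      obtain ⟨he1, he2⟩ := hδ hzδ
      rw [sub_zero] at he1
      refine ⟨he1, ?_⟩
      have key : ‖h 0‖ - ‖h z‖ ≤ dist (h z) (h 0) := by
        rw [dist_comm, dist_eq_norm]
        exact norm_sub_norm_le _ _
      simp only [Complex.norm_eq_abs] at key
      linarith
    refine ⟨{0}, fun _ => m, ?_, ?_, ?_, ?_⟩
    · intro z hz
      simp only [Finset.mem_singleton] at hz
      subst hz
      simp only [mem_closedBall, dist_self]
      positivity
    · intro z hz
      obtain ⟨he1, he2⟩ := hball z hz
      simp only [Finset.mem_singleton]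
      constructor
      · intro hroot
        by_contra hzne
        -- z ≠ 0, z^{2n} = z^m h z
        have h2n : 2 * n = m + (2 * n - m) := by omega
        rw [he1] at hroot
        have hzm : z ^ m ≠ 0 := pow_ne_zero _ hzne
        have hcalc : z ^ (2 * n - m) = h z := by
          have : z ^ m * z ^ (2*n - m) = z ^ m * h z := by
            rw [← pow_add, ← h2n, hroot]
          exact mul_left_cancel₀ hzm this
        -- size contradiction
        have habs : Complex.abs (z ^ (2*n-m)) ≤ ε := by
          rw [map_pow]
          rw [mem_closedBall, dist_zero_right] at hz
          have hz1 : Complex.abs z ≤ 1 := by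
            have : q ^ n ≤ 1 := le_of_lt (lt_of_lt_of_le hqn (le_trans (min_le_right _ _) (min_le_left _ _)))
            exact le_trans hz this
          calc Complex.abs z ^ (2*n-m) ≤ Complex.abs z ^ 1 := by
                apply pow_le_pow_of_le_one (Complex.abs.nonneg z) hz1; omega
          _ = Complex.abs z := pow_one _
          _ ≤ q ^ n := hz
          _ ≤ ε := hqn.le
        have hε4 : ε ≤ Complex.abs (h 0) / 4 := le_trans (min_le_right _ _) (min_le_right _ _)
        rw [hcalc] at habs
        have := Complex.abs.pos hh0
        linarith
      · intro hz0'
        subst hz0'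
        rw [he1]
        have : (0:ℂ) ^ m = 0 := zero_pow hm.ne'
        rw [this, zero_mul, zero_pow (by omega : 2*n ≠ 0)]
    · intro z hz
      simp only [Finset.mem_singleton] at hz
      subst hz
      refine ⟨hm, fun w => w ^ (2*n - m) - h w, ?_, ?_, ?_⟩
      · exact ((analyticAt_id).pow _).sub hh
      · have : (0:ℂ) ^ (2*n - m) = 0 := zero_pow (by omega)
        simp [this, hh0]
      · filter_upwards [hfac] with w hw
        rw [hw, sub_zero]
        have h2n : 2 * n = m + (2 * n - m) := by omega
        calc w ^ (2*n) - w ^ m * h w = w ^ m * w ^ (2*n-m) - w ^ m * h w := by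
              rw [← pow_add, ← h2n]
        _ = w ^ m * (w ^ (2*n-m) - h w) := by ring
    · simp
  · -- generic case z0 ≠ 0
    have habsz0 : 0 < Complex.abs z0 := Complex.abs.pos hz00
    have hmR : ((m:ℝ)) ≠ 0 := Nat.cast_ne_zero.mpr hm.ne'
    have hmC : ((m:ℂ)) ≠ 0 := Nat.cast_ne_zero.mpr hm.ne'
    set ζ : ℂ := Complex.exp (2 * Real.pi * Complex.I / m) with hζdef
    have hζprim : IsPrimitiveRoot ζ m := Complex.isPrimitiveRoot_exp m hm.ne'
    have hζabs : ∀ k : ℕ, Complex.abs (ζ ^ k) = 1 := by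
      intro k
      have h2 : Complex.abs ζ ^ m = 1 := by
        rw [← map_pow, hζprim.pow_eq_one, map_one]
      have h3 : Complex.abs ζ = 1 := by
        have hrw : 2 * (Real.pi:ℂ) * Complex.I / (m:ℂ) = ((2*Real.pi/m : ℝ):ℂ) * Complex.I := by
          push_cast
          ring
        rw [hζdef, hrw, Complex.abs_exp]
        simp [Complex.mul_re]
      rw [map_pow, h3, one_pow]
    -- eventual facts near z0
    have hcont : ∀ᶠ z in nhds z0, Complex.abs (h z / h z0 - 1) < 1/2 := by
      have hc : ContinuousAt (fun z => h z / h z0) z0 := hh.continuousAt.div_const _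
      have h2 := Metric.tendsto_nhds.mp hc (1/2) (by norm_num)
      filter_upwards [h2] with z hz
      rw [Complex.dist_eq_abs, div_self hh0] at hz
      exact hz
    have hana : ∀ᶠ z in nhds z0, AnalyticAt ℂ h z := hh.eventually_analyticAt
    obtain ⟨δ1, hδ10, hδ1⟩ := Metric.eventually_nhds_iff.mp (hfac.and (hana.and hcont))
    set δ : ℝ := min (δ1/2) (min (Complex.abs z0/4) ((ρ - Complex.abs z0)/2)) with hδdef
    have hδ0 : 0 < δ := by
      simp only [hδdef, lt_min_iff]
      refine ⟨by linarith, by linarith, by linarith⟩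
    have hδz0 : δ ≤ Complex.abs z0 / 4 := le_trans (min_le_right _ _) (min_le_left _ _)
    have hδρ : δ ≤ (ρ - Complex.abs z0)/2 := le_trans (min_le_right _ _) (min_le_right _ _)
    have hδδ1 : δ < δ1 := lt_of_le_of_lt (min_le_left _ _) (by linarith)
    set ρ' : ℝ := Complex.abs z0 + δ with hρ'def
    have hρ'0 : 0 < ρ' := by positivity
    have hρ'ρ : ρ' < ρ := by simp only [hρ'def]; linarith
    have hρ'1 : ρ' < 1 := hρ'ρ.trans hρ2
    have hlow0 : 0 < Complex.abs z0 - δ := by linarith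
    -- facts on the ball
    have hBF : ∀ z ∈ closedBall z0 δ,
        g z = (z - z0)^m * h z ∧ AnalyticAt ℂ h z ∧ h z ≠ 0 ∧
        (h z / h z0) ∈ Complex.slitPlane ∧ z ≠ 0 ∧ (z / z0) ∈ Complex.slitPlane ∧
        Complex.abs z0 - δ ≤ Complex.abs z ∧ Complex.abs z ≤ ρ' := by
      intro z hz
      rw [mem_closedBall] at hz
      obtain ⟨he1, he2, he3⟩ := hδ1 (lt_of_le_of_lt hz hδδ1)
      have hd : Complex.abs (z - z0) ≤ δ := by rw [← Complex.dist_eq_abs]; exact hz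
      have hlow : Complex.abs z0 - δ ≤ Complex.abs z := by
        have h4 : Complex.abs z0 - Complex.abs z ≤ Complex.abs (z0 - z) := by
          simpa [Complex.norm_eq_abs] using norm_sub_norm_le z0 z
        rw [Complex.abs.map_sub] at h4
        linarith
      have hzne : z ≠ 0 := by
        intro h0
        rw [h0, map_zero] at hlow
        linarith
      have hslz : z / z0 ∈ Complex.slitPlane := by
        apply Complex.ball_one_subset_slitPlane
        rw [mem_ball, Complex.dist_eq_abs]
        have h6 : z / z0 - 1 = (z - z0)/z0 := by field_simp
        rw [h6, map_div₀]
        rw [div_lt_one habsz0]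
        linarith
      have hslh : h z / h z0 ∈ Complex.slitPlane := by
        apply Complex.ball_one_subset_slitPlane
        rw [mem_ball, Complex.dist_eq_abs]
        linarith
      have hhz : h z ≠ 0 := by
        intro h0
        rw [h0, zero_div] at he3
        rw [show (0:ℂ) - 1 = -1 by ring, map_neg_eq_map, map_one] at he3
        norm_num at he3
      have hup : Complex.abs z ≤ ρ' := by
        have h7 : Complex.abs z = Complex.abs (z0 + (z - z0)) := by ring_nf
        rw [h7]
        calc Complex.abs (z0 + (z - z0)) ≤ Complex.abs z0 + Complex.abs (z - z0) :=
              Complex.abs.add_le _ _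
        _ ≤ ρ' := by simp only [hρ'def]; linarith
      exact ⟨he1, he2, hhz, hslh, hzne, hslz, hlow, hup⟩
    -- the logarithm Λ
    set Λ : ℂ → ℂ := fun z => Complex.log z0 + Complex.log (z / z0) with hΛdef
    have hexpΛ : ∀ z ∈ closedBall z0 δ, Complex.exp (Λ z) = z := by
      intro z hz
      obtain ⟨_,_,_,_,hzne,_,_,_⟩ := hBF z hz
      simp only [hΛdef]
      rw [Complex.exp_add, Complex.exp_log hz00, Complex.exp_log (div_ne_zero hzne hz00)]
      field_simp
    have hreΛ : ∀ z ∈ closedBall z0 δ, (Λ z).re = Real.log (Complex.abs z) := by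
      intro z hz
      have h1 := congrArg Complex.abs (hexpΛ z hz)
      rw [Complex.abs_exp] at h1
      rw [← h1, Real.log_exp]
    have hΛan : ∀ z ∈ closedBall z0 δ, AnalyticAt ℂ Λ z := by
      intro z hz
      obtain ⟨_,_,_,_,hzne,hslz,_,_⟩ := hBF z hz
      exact analyticAt_const.add ((analyticAt_id.div analyticAt_const hz00).clog hslz)
    have hΛd : ∀ z ∈ closedBall z0 δ, HasDerivAt Λ z⁻¹ z := by
      intro z hz
      obtain ⟨_,_,_,_,hzne,hslz,_,_⟩ := hBF z hz
      have h1 : HasDerivAt (fun w : ℂ => w / z0) (1 / z0) z := by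
        simpa using (hasDerivAt_id z).div_const z0
      have h2 := (h1.clog hslz).const_add (Complex.log z0)
      have h3 : 1 / z0 / (z / z0) = z⁻¹ := by field_simp
      rw [h3] at h2
      exact h2
    -- the m-th root r of h
    have hc0m : Complex.exp (Complex.log (h z0) * (m:ℂ)⁻¹) ^ m = h z0 := by
      rw [← Complex.exp_nat_mul]
      rw [show (m:ℂ) * (Complex.log (h z0) * (m:ℂ)⁻¹) = Complex.log (h z0) by
        field_simp]
      exact Complex.exp_log hh0
    set r : ℂ → ℂ := fun z => Complex.exp (Complex.log (h z / h z0) * (m:ℂ)⁻¹) *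
      Complex.exp (Complex.log (h z0) * (m:ℂ)⁻¹) with hrdef
    have hrne : ∀ z, r z ≠ 0 := fun z => mul_ne_zero (Complex.exp_ne_zero _) (Complex.exp_ne_zero _)
    have hrm : ∀ z ∈ closedBall z0 δ, r z ^ m = h z := by
      intro z hz
      obtain ⟨_,_,hhz,_⟩ := hBF z hz
      simp only [hrdef]
      rw [mul_pow, ← Complex.exp_nat_mul]
      rw [show (m:ℂ) * (Complex.log (h z / h z0) * (m:ℂ)⁻¹) = Complex.log (h z / h z0) by
        field_simp]
      rw [Complex.exp_log (div_ne_zero hhz hh0), hc0m]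
      field_simp
    have hran : ∀ z ∈ closedBall z0 δ, AnalyticAt ℂ r z := by
      intro z hz
      obtain ⟨_,hhana,hhz,hslh,_⟩ := hBF z hz
      have h1 : AnalyticAt ℂ (fun w => h w / h z0) z := hhana.div analyticAt_const hh0
      exact (((h1.clog hslh).mul analyticAt_const).cexp).mul analyticAt_const
    -- compactness constants
    have hcp : IsCompact (closedBall z0 δ) := isCompact_closedBall _ _
    have hnem : (closedBall z0 δ).Nonempty := ⟨z0, mem_closedBall_self hδ0.le⟩
    have hrcont : ContinuousOn (fun z => Complex.abs (r z)) (closedBall z0 δ) := fun z hz =>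
      (Complex.continuous_abs.continuousAt.comp (hran z hz).continuousAt).continuousWithinAt
    obtain ⟨zb, hzb, hzbmin⟩ := hcp.exists_isMinOn hnem hrcont
    set b := Complex.abs (r zb) with hbdef
    have hb0 : 0 < b := Complex.abs.pos (hrne zb)
    have hble : ∀ z ∈ closedBall z0 δ, b ≤ Complex.abs (r z) := fun z hz => hzbmin hz
    obtain ⟨zB, hzB, hzBmax⟩ := hcp.exists_isMaxOn hnem hrcont
    set B := Complex.abs (r zB) with hBdef
    have hBge : ∀ z ∈ closedBall z0 δ, Complex.abs (r z) ≤ B := fun z hz => hzBmax hz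
    have hB0 : 0 < B := lt_of_lt_of_le hb0 (hble zB hzB)
    have hrderan : AnalyticOnNhd ℂ r (closedBall z0 δ) := hran
    have hdrcont : ContinuousOn (fun z => Complex.abs (deriv r z)) (closedBall z0 δ) := by
      intro z hz
      exact (Complex.continuous_abs.continuousAt.comp
        (hrderan.deriv z hz).continuousAt).continuousWithinAt
    obtain ⟨zC, hzC, hzCmax⟩ := hcp.exists_isMaxOn hnem hdrcont
    set C2 := Complex.abs (deriv r zC) with hC2def
    have hC2le : ∀ z ∈ closedBall z0 δ, Complex.abs (deriv r z) ≤ C2 := fun z hz => hzCmax hz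
    have hC20 : 0 ≤ C2 := Complex.abs.nonneg _
    set C1 : ℝ := (Complex.abs z0 - δ)⁻¹ with hC1def
    have hC10 : 0 < C1 := inv_pos.mpr hlow0
    have hzinvle : ∀ z ∈ closedBall z0 δ, Complex.abs z⁻¹ ≤ C1 := by
      intro z hz
      obtain ⟨_,_,_,_,hzne,_,hlow,_⟩ := hBF z hz
      rw [map_inv₀]
      simp only [hC1def]
      exact inv_anti₀ hlow0 hlow
    -- n-dependent quantities
    set q' : ℝ := ρ' ^ ((2:ℝ)/m) with hq'def
    have hq'0 : 0 < q' := Real.rpow_pos_of_pos hρ'0 _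
    have hq'1 : q' < 1 := Real.rpow_lt_one hρ'0.le hρ'1 (by positivity)
    have hq'q : q' < q := Real.rpow_lt_rpow hρ'0.le hρ'ρ (by positivity)
    have hρ'pow : ∀ n : ℕ, ρ' ^ ((2*n:ℝ)/m) = q'^n := fun n => rpow_pow_eq hρ'0 m n
    set sn : ℕ → ℂ := fun n => (((2*n : ℝ)/m : ℝ) : ℂ) with hsndef
    have hsnmul : ∀ n : ℕ, (m:ℂ) * sn n = ((2*n : ℕ) : ℂ) := by
      intro n
      simp only [hsndef]
      rw [show ((m:ℂ)) = (((m:ℝ)):ℂ) by push_cast; ring]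
      rw [← Complex.ofReal_mul]
      rw [show ((m:ℝ)) * ((2*n:ℝ)/m) = (2*n:ℝ) by field_simp]
      push_cast
      ring
    have hsnabs : ∀ n : ℕ, Complex.abs (sn n) = (2*n:ℝ)/m := by
      intro n
      simp only [hsndef, Complex.abs_ofReal]
      rw [_root_.abs_of_nonneg (by positivity)]
    set Gn : ℕ → ℂ → ℂ := fun n z => Complex.exp (sn n * Λ z) with hGndef
    set An : ℕ → ℂ → ℂ := fun n z => Gn n z / r z with hAndef
    set T : ℕ → ℕ → ℂ → ℂ := fun n k z => z0 + ζ^k * An n z with hTdef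
    set dA : ℕ → ℂ → ℂ := fun n z =>
      (Gn n z * (sn n * z⁻¹) * r z - Gn n z * deriv r z) / (r z)^2 with hdAdef
    set Kn : ℕ → ℝ := fun n => q'^n * ((2*n:ℝ)/m * C1 * B + C2) / b^2 with hKndef
    have hGm : ∀ n : ℕ, ∀ z ∈ closedBall z0 δ, Gn n z ^ m = z ^ (2*n) := by
      intro n z hz
      simp only [hGndef]
      rw [← Complex.exp_nat_mul, ← mul_assoc, hsnmul n, Complex.exp_nat_mul, hexpΛ z hz]
    have hGabs : ∀ n : ℕ, ∀ z ∈ closedBall z0 δ,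
        Complex.abs (Gn n z) = Complex.abs z ^ ((2*n:ℝ)/m) := by
      intro n z hz
      obtain ⟨_,_,_,_,hzne,_,hlow,_⟩ := hBF z hz
      have hzpos : 0 < Complex.abs z := lt_of_lt_of_le hlow0 hlow
      simp only [hGndef, hsndef]
      rw [Complex.abs_exp, Complex.re_ofReal_mul, hreΛ z hz,
        Real.rpow_def_of_pos hzpos, mul_comm]
    have hGle : ∀ n : ℕ, ∀ z ∈ closedBall z0 δ, Complex.abs (Gn n z) ≤ q'^n := by
      intro n z hz
      obtain ⟨_,_,_,_,_,_,_,hup⟩ := hBF z hz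
      rw [hGabs n z hz, ← hρ'pow n]
      exact Real.rpow_le_rpow (Complex.abs.nonneg z) hup (by positivity)
    have hAabs : ∀ n : ℕ, ∀ z ∈ closedBall z0 δ, Complex.abs (An n z) ≤ q'^n / b := by
      intro n z hz
      simp only [hAndef]
      rw [map_div₀]
      exact div_le_div₀ (by positivity) (hGle n z hz) hb0 (hble z hz)
    have hAne : ∀ n : ℕ, ∀ z : ℂ, An n z ≠ 0 := fun n z =>
      div_ne_zero (Complex.exp_ne_zero _) (hrne z)
    have hAan : ∀ n : ℕ, ∀ z ∈ closedBall z0 δ, AnalyticAt ℂ (An n) z := by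
      intro n z hz
      exact ((analyticAt_const.mul (hΛan z hz)).cexp).div (hran z hz) (hrne z)
    have hAd : ∀ n : ℕ, ∀ z ∈ closedBall z0 δ, HasDerivAt (An n) (dA n z) z := by
      intro n z hz
      have hG : HasDerivAt (Gn n) (Complex.exp (sn n * Λ z) * (sn n * z⁻¹)) z :=
        ((hΛd z hz).const_mul (sn n)).cexp
      exact hG.div ((hran z hz).differentiableAt.hasDerivAt) (hrne z)
    have hdAle : ∀ n : ℕ, ∀ z ∈ closedBall z0 δ, Complex.abs (dA n z) ≤ Kn n := by
      intro n z hz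
      obtain ⟨_,_,_,_,hzne,_,hlow,hup⟩ := hBF z hz
      have hGq := hGle n z hz
      have tri : Complex.abs (Gn n z * (sn n * z⁻¹) * r z - Gn n z * deriv r z)
          ≤ Complex.abs (Gn n z * (sn n * z⁻¹) * r z) + Complex.abs (Gn n z * deriv r z) := by
        rw [← Complex.norm_eq_abs, ← Complex.norm_eq_abs, ← Complex.norm_eq_abs]
        exact norm_sub_le _ _
      have t1 : Complex.abs (Gn n z * (sn n * z⁻¹) * r z) ≤ q'^n * ((2*n:ℝ)/m * C1) * B := by
        rw [map_mul, map_mul, map_mul, hsnabs n]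
        gcongr <;> first
          | exact Complex.abs.nonneg _
          | exact hGq
          | exact hzinvle z hz
          | exact hBge z hz
      have t2 : Complex.abs (Gn n z * deriv r z) ≤ q'^n * C2 := by
        rw [map_mul]
        exact mul_le_mul hGq (hC2le z hz) (Complex.abs.nonneg _) (by positivity)
      have hnum : Complex.abs (Gn n z * (sn n * z⁻¹) * r z - Gn n z * deriv r z)
          ≤ q'^n * ((2*n:ℝ)/m * C1 * B + C2) := by
        calc Complex.abs (Gn n z * (sn n * z⁻¹) * r z - Gn n z * deriv r z)
            ≤ Complex.abs (Gn n z * (sn n * z⁻¹) * r z) + Complex.abs (Gn n z * deriv r z) := tri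
        _ ≤ q'^n * ((2*n:ℝ)/m * C1) * B + q'^n * C2 := add_le_add t1 t2
        _ = q'^n * ((2*n:ℝ)/m * C1 * B + C2) := by ring
      have hb2 : b^2 ≤ Complex.abs (r z) ^ 2 := by nlinarith [hble z hz, hb0]
      simp only [hdAdef, hKndef]
      rw [map_div₀, map_pow]
      exact div_le_div₀ (by positivity) hnum (by positivity) hb2
    -- eventual conditions on n
    have hN1 : ∀ᶠ n : ℕ in atTop, q^n < δ :=
      (tendsto_pow_atTop_nhds_zero_of_lt_one hq0.le hq1).eventually_lt_const hδ0
    have hN2 : ∀ᶠ n : ℕ in atTop, q'^n / b < q^n := by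
      have hw1 : q'/q < 1 := (div_lt_one hq0).mpr hq'q
      have hw0 : 0 ≤ q'/q := by positivity
      have hev := (tendsto_pow_atTop_nhds_zero_of_lt_one hw0 hw1).eventually_lt_const hb0
      filter_upwards [hev] with n hn
      have hqn0 : 0 < q^n := by positivity
      rw [div_pow] at hn
      have h1 : q'^n < b * q^n := by
        have := (div_lt_iff₀ hqn0).mp hn
        linarith [this]
      rw [div_lt_iff₀ hb0]
      linarith [h1]
    have hN3 : ∀ᶠ n : ℕ in atTop, Kn n ≤ 1/2 := by
      have h1 : Tendsto (fun n : ℕ => (n:ℝ) * q'^n) atTop (nhds 0) :=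
        tendsto_self_mul_const_pow_of_lt_one hq'0.le hq'1
      have h2 : Tendsto (fun n : ℕ => q'^n) atTop (nhds 0) :=
        tendsto_pow_atTop_nhds_zero_of_lt_one hq'0.le hq'1
      have heq : Kn = fun n : ℕ =>
          (2*C1*B/m/b^2) * ((n:ℝ) * q'^n) + (C2/b^2) * q'^n := by
        funext n
        simp only [hKndef]
        field_simp
      have ht : Tendsto Kn atTop (nhds 0) := by
        rw [heq]
        have := (h1.const_mul (2*C1*B/(m:ℝ)/b^2)).add (h2.const_mul (C2/b^2))
        simpa using this
      exact ht.eventually_le_const (by norm_num)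
    obtain ⟨n0, hn0⟩ := eventually_atTop.mp ((hN1.and hN2).and hN3)
    refine ⟨1, one_pos, n0, ?_⟩
    intro n hn
    obtain ⟨⟨hE1, hE2⟩, hE3⟩ := hn0 n hn
    simp only [Real.one_rpow, one_mul, hεq]
    have hε0 : 0 < q^n := by positivity
    have hsub : closedBall z0 (q^n) ⊆ closedBall z0 δ := closedBall_subset_closedBall hE1.le
    -- the maps T n k are contractions of the small ball
    have hmaps : ∀ k : ℕ, Set.MapsTo (T n k) (closedBall z0 (q^n)) (closedBall z0 (q^n)) := by
      intro k z hz
      rw [mem_closedBall]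
      have h1 : dist (T n k z) z0 = Complex.abs (ζ^k * An n z) := by
        rw [Complex.dist_eq_abs]
        congr 1
        simp only [hTdef]
        ring
      rw [h1, map_mul, hζabs k, one_mul]
      calc Complex.abs (An n z) ≤ q'^n / b := hAabs n z (hsub hz)
      _ ≤ q^n := hE2.le
    have hlip : ∀ k : ℕ, ∀ x ∈ closedBall z0 (q^n), ∀ y ∈ closedBall z0 (q^n),
        dist (T n k x) (T n k y) ≤ (1/2) * dist x y := by
      intro k x hx y hy
      have hmvt := Convex.norm_image_sub_le_of_norm_hasDerivWithin_le
        (f := An n) (f' := dA n) (s := closedBall z0 (q^n)) (C := 1/2)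
        (fun w hw => (hAd n w (hsub hw)).hasDerivWithinAt)
        (fun w hw => by
          rw [Complex.norm_eq_abs]
          exact le_trans (hdAle n w (hsub hw)) hE3)
        (convex_closedBall _ _) hy hx
      have h1 : T n k x - T n k y = ζ^k * (An n x - An n y) := by
        simp only [hTdef]
        ring
      rw [dist_eq_norm, h1, norm_mul]
      rw [show ‖ζ^k‖ = 1 by rw [Complex.norm_eq_abs]; exact hζabs k, one_mul]
      calc ‖An n x - An n y‖ ≤ (1/2) * ‖x - y‖ := hmvt
      _ = (1/2) * dist x y := by rw [dist_eq_norm]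
    have hfixex : ∀ k : ℕ, ∃ y ∈ closedBall z0 (q^n), T n k y = y := by
      intro k
      have hcl : IsComplete (closedBall z0 (q^n)) := Metric.isClosed_closedBall.isComplete
      have hcw : ContractingWith (1/2 : NNReal)
          ((hmaps k).restrict (T n k) (closedBall z0 (q^n)) (closedBall z0 (q^n))) := by
        constructor
        · rw [← NNReal.coe_lt_coe]
          norm_num
        · apply LipschitzWith.of_dist_le_mul
          rintro ⟨x, hx⟩ ⟨y, hy⟩
          have hl := hlip k x hx y hy
          simp only [Set.MapsTo.restrict, Subtype.dist_eq, Subtype.map]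
          calc dist (T n k x) (T n k y) ≤ (1/2) * dist x y := hl
          _ = ((1/2 : NNReal) : ℝ) * dist x y := by norm_num
      obtain ⟨y, hymem, hyfix, -⟩ := ContractingWith.exists_fixedPoint' hcl (hmaps k) hcw
        (mem_closedBall_self hε0.le) (edist_ne_top _ _)
      exact ⟨y, hymem, hyfix⟩
    choose zf hzfmem hzffix using hfixex
    have huniq : ∀ k : ℕ, ∀ y ∈ closedBall z0 (q^n), T n k y = y → y = zf k := by
      intro k y hy hfy
      have h1 := hlip k y hy (zf k) (hzfmem k)
      rw [hfy, hzffix k] at h1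
      have h2 : (0:ℝ) ≤ dist y (zf k) := dist_nonneg
      have h3 : dist y (zf k) = 0 := by linarith
      exact dist_eq_zero.mp h3
    -- the key factorization on the δ-ball
    have hkey : ∀ z ∈ closedBall z0 δ,
        z ^ (2*n) - g z = (- h z) * ∏ k ∈ Finset.range m, (z - T n k z) := by
      intro z hz
      obtain ⟨hg, _, hhz, _⟩ := hBF z hz
      have hcongr : ∀ k ∈ Finset.range m, z - T n k z = (z - z0) - ζ^k * (An n z) := by
        intro k _
        simp only [hTdef]
        ring
      have hprod : ∏ k ∈ Finset.range m, (z - T n k z) = (z - z0)^m - (An n z)^m := by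
        rw [Finset.prod_congr rfl hcongr, hζdef]
        exact prod_pow_sub m hm _ _
      have hAm : (An n z)^m = z^(2*n) / h z := by
        simp only [hAndef]
        rw [div_pow, hGm n z hz, hrm z hz]
      rw [hprod, hAm, hg]
      field_simp
      ring
    have hdistinct : ∀ j, j < m → ∀ k, k < m → zf j = zf k → j = k := by
      intro j hj k hk hjk
      have e1 := hzffix j
      have e2 := hzffix k
      rw [hjk] at e1
      have h1 : ζ^j * An n (zf k) = ζ^k * An n (zf k) := by
        have h2 := e1.trans e2.symm
        simp only [hTdef] at h2
        exact add_left_cancel h2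
      have hζjk : ζ^j = ζ^k := mul_right_cancel₀ (hAne n (zf k)) h1
      exact hζprim.pow_inj hj hk hζjk
    refine ⟨(Finset.range m).image (fun k => zf k), fun _ => 1, ?_, ?_, ?_, ?_⟩
    · intro z hz
      simp only [Finset.mem_image, Finset.mem_range] at hz
      obtain ⟨k, hk, rfl⟩ := hz
      exact hzfmem k
    · intro z hz
      simp only [Finset.mem_image, Finset.mem_range]
      constructor
      · intro hroot
        have hz' := hsub hz
        obtain ⟨_, _, hhz, _⟩ := hBF z hz'
        have h0 : (- h z) * ∏ k ∈ Finset.range m, (z - T n k z) = 0 := by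
          rw [← hkey z hz', hroot, sub_self]
        have hprod0 : ∏ k ∈ Finset.range m, (z - T n k z) = 0 := by
          rcases mul_eq_zero.mp h0 with h | h
          · exact absurd (neg_eq_zero.mp h) hhz
          · exact h
        obtain ⟨k, hk', hfz⟩ := Finset.prod_eq_zero_iff.mp hprod0
        have hTz : T n k z = z := (sub_eq_zero.mp hfz).symm
        exact ⟨k, Finset.mem_range.mp hk', (huniq k z hz hTz).symm⟩
      · rintro ⟨k, hk, rfl⟩
        have hz' := hsub (hzfmem k)
        have hkk := hkey (zf k) hz'
        have hzero : zf k - T n k (zf k) = 0 := by rw [hzffix k, sub_self]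
        have hp0 : ∏ j ∈ Finset.range m, (zf k - T n j (zf k)) = 0 :=
          Finset.prod_eq_zero (Finset.mem_range.mpr hk) hzero
        rw [hp0, mul_zero] at hkk
        exact sub_eq_zero.mp hkk
    · intro z hz
      simp only [Finset.mem_image, Finset.mem_range] at hz
      obtain ⟨k, hk, rfl⟩ := hz
      refine ⟨one_pos, ?_⟩
      have hzkmem := hzfmem k
      have hzkball : zf k ∈ ball z0 δ := lt_of_le_of_lt (mem_closedBall.mp hzkmem) hE1
      have hzkδ : zf k ∈ closedBall z0 δ := ball_subset_closedBall hzkball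
      have hTd : HasDerivAt (T n k) (ζ^k * dA n (zf k)) (zf k) :=
        ((hAd n (zf k) hzkδ).const_mul (ζ^k)).const_add z0
      have hud : HasDerivAt (fun w => w - T n k w) (1 - ζ^k * dA n (zf k)) (zf k) :=
        (hasDerivAt_id (zf k)).sub hTd
      have huan : AnalyticAt ℂ (fun w => w - T n k w) (zf k) :=
        analyticAt_id.sub (analyticAt_const.add (analyticAt_const.mul (hAan n (zf k) hzkδ)))
      have hu0 : (fun w => w - T n k w) (zf k) = 0 := by
        simp only
        rw [hzffix k, sub_self]
      have hderivne : deriv (fun w => w - T n k w) (zf k) ≠ 0 := by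
        rw [hud.deriv]
        intro hcontra
        have h1 : Complex.abs (ζ^k * dA n (zf k)) ≤ 1/2 := by
          rw [map_mul, hζabs, one_mul]
          exact le_trans (hdAle n (zf k) hzkδ) hE3
        have h2 : ζ^k * dA n (zf k) = 1 := by
          have := sub_eq_zero.mp hcontra
          exact this.symm
        rw [h2, map_one] at h1
        norm_num at h1
      obtain ⟨qq, hqan, hqq0, hqfac⟩ := simple_factor huan hu0 hderivne
      refine ⟨fun w => (- h w) * (∏ j ∈ (Finset.range m).erase k, (w - T n j w)) * qq w,
        ?_, ?_, ?_⟩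
      · obtain ⟨_, hhank, _⟩ := hBF (zf k) hzkδ
        have h1 : AnalyticAt ℂ (fun w => -h w) (zf k) := hhank.neg
        have h2 : AnalyticAt ℂ (fun w => ∏ j ∈ (Finset.range m).erase k, (w - T n j w)) (zf k) :=
          Finset.analyticAt_fun_prod _ (fun j _ => analyticAt_id.sub
            (analyticAt_const.add (analyticAt_const.mul (hAan n (zf k) hzkδ))))
        exact (h1.mul h2).mul hqan
      · obtain ⟨_, _, hhzk, _⟩ := hBF (zf k) hzkδ
        refine mul_ne_zero (mul_ne_zero (neg_ne_zero.mpr hhzk) ?_) hqq0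
        rw [Finset.prod_ne_zero_iff]
        intro j hj h0
        obtain ⟨hjne, hjmem⟩ := Finset.mem_erase.mp hj
        have hTj : T n j (zf k) = zf k := (sub_eq_zero.mp h0).symm
        have h3 := huniq j (zf k) hzkmem hTj
        exact hjne (hdistinct k hk j (Finset.mem_range.mp hjmem) h3).symm
      · have hev1 : ∀ᶠ w in nhds (zf k), w ∈ ball z0 δ := isOpen_ball.eventually_mem hzkball
        filter_upwards [hqfac, hev1] with w hw1 hw2
        have hw3 := hkey w (ball_subset_closedBall hw2)
        rw [pow_one, hw3, ← Finset.mul_prod_erase _ _ (Finset.mem_range.mpr hk), hw1]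
        ring
    · have hcard : ((Finset.range m).image (fun k => zf k)).card = m := by
        rw [Finset.card_image_of_injOn, Finset.card_range]
        intro a ha b hb hab
        exact hdistinct a (Finset.mem_range.mp ha) b (Finset.mem_range.mp hb) hab
      simp [hcard]
end
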